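/- Let Σ be a symmetric positive definite n×n real matrix, T a symmetric n×n real matrix, and k_B > 0. Then the equation Σ⁻¹ Ω + Ω Σ⁻¹ = (k_B/2)(Σ⁻¹ T − T Σ⁻¹) has a unique solution Ω among n×n real matrices; this solution is skew-symmetric and is given by Ω* = (k_B/2) 𝓛_{Σ⁻¹}(Σ⁻¹ T − T Σ⁻¹), where 𝓛_A(X) := ∫₀^∞ exp(−τA) X exp(−τA) dτ. -/

import Mathlib

set_option linter.unusedVariables false
set_option linter.unusedTactic false

open Matrix MeasureTheory Set

attribute [local instance] Matrix.linftyOpNormedAddCommGroup Matrix.linftyOpNormedSpace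

/-- The Bochner integral `∫₀^∞ exp(-τA) X exp(-τA) dτ` of matrix-valued functions. -/
noncomputable def lyapInt {n : ℕ} (A X : Matrix (Fin n) (Fin n) ℝ) : Matrix (Fin n) (Fin n) ℝ :=
  ∫ τ in Set.Ioi (0 : ℝ), NormedSpace.exp (-(τ • A)) * X * NormedSpace.exp (-(τ • A))

lemma integral_exp_neg_mul_Ioi {b : ℝ} (hb : 0 < b) :
    ∫ τ in Set.Ioi (0:ℝ), Real.exp (-b * τ) = b⁻¹ := by
  have h := integral_comp_mul_left_Ioi (fun x => Real.exp (-x)) 0 hb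
  simp only [mul_zero, integral_exp_neg_Ioi, neg_zero, Real.exp_zero, smul_eq_mul, mul_one] at h
  simpa only [neg_mul] using h

noncomputable def conjCLM {n : ℕ} (U : Matrix (Fin n) (Fin n) ℝ) :
    Matrix (Fin n) (Fin n) ℝ →L[ℝ] Matrix (Fin n) (Fin n) ℝ :=
  LinearMap.toContinuousLinearMap ((LinearMap.mulLeft ℝ U).comp (LinearMap.mulRight ℝ (star U)))

lemma conjCLM_apply {n : ℕ} (U M : Matrix (Fin n) (Fin n) ℝ) :
    conjCLM U M = U * (M * star U) := rfl

noncomputable def entryCLM {n : ℕ} (i j : Fin n) :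
    Matrix (Fin n) (Fin n) ℝ →L[ℝ] ℝ :=
  LinearMap.toContinuousLinearMap
    { toFun := fun M => M i j
      map_add' := fun M N => rfl
      map_smul' := fun c M => rfl }

lemma entryCLM_apply {n : ℕ} (i j : Fin n) (M : Matrix (Fin n) (Fin n) ℝ) :
    entryCLM i j M = M i j := rfl

lemma lyap_main {n : ℕ} {A : Matrix (Fin n) (Fin n) ℝ} (hA : A.PosDef)
    (X : Matrix (Fin n) (Fin n) ℝ) :
    @IntegrableOn _ _ _ PseudoMetricSpace.toUniformSpace.toTopologicalSpace _ (fun τ : ℝ => NormedSpace.exp (-(τ • A)) * X * NormedSpace.exp (-(τ • A)))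
      (Set.Ioi 0) volume ∧
    A * lyapInt A X + lyapInt A X * A = X := by
  have hAh := hA.isHermitian
  set U : Matrix (Fin n) (Fin n) ℝ := (hAh.eigenvectorUnitary : Matrix (Fin n) (Fin n) ℝ) with hUdef
  set d : Fin n → ℝ := hAh.eigenvalues with hddef
  have hd : ∀ i, 0 < d i := fun i => hA.eigenvalues_pos i
  have hU1 : U * star U = 1 := Unitary.coe_mul_star_self _
  have hU2 : star U * U = 1 := Unitary.coe_star_mul_self _
  have spec : A = U * Matrix.diagonal d * star U := by
    have h := hAh.spectral_theorem
    simpa [RCLike.ofReal_real_eq_id] using h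
  -- exponential of -(τ • A)
  have hexp : ∀ τ : ℝ, NormedSpace.exp (-(τ • A))
      = U * Matrix.diagonal (fun i => Real.exp (-(τ * d i))) * star U := by
    intro τ
    have h1 : -(τ • A) = U * Matrix.diagonal (fun i => -(τ * d i)) * star U := by
      rw [spec, show Matrix.diagonal (fun i => -(τ * d i)) = -(τ • Matrix.diagonal d) by
        ext i j; by_cases h : i = j <;> simp [Matrix.diagonal, h]]
      simp [Matrix.mul_smul, Matrix.smul_mul, Matrix.neg_mul, Matrix.mul_neg]
    have h2 := Matrix.exp_units_conj
      (⟨U, star U, hU1, hU2⟩ : (Matrix (Fin n) (Fin n) ℝ)ˣ)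
      (Matrix.diagonal (fun i => -(τ * d i)))
    simp only [Units.inv_mk, Units.val_mk] at h2
    rw [h1]
    have h3 : NormedSpace.exp (Matrix.diagonal (fun i => -(τ * d i)))
        = Matrix.diagonal (fun i => Real.exp (-(τ * d i))) := by
      rw [Matrix.exp_diagonal, Pi.exp_def]
      congr 1
      funext i
      rw [← Real.exp_eq_exp_ℝ]
    rw [h2, h3]
  set Y : Matrix (Fin n) (Fin n) ℝ := star U * X * U with hY
  set G : ℝ → Matrix (Fin n) (Fin n) ℝ :=
    fun τ => Matrix.of (fun i j => Real.exp (-(d i + d j) * τ) * Y i j) with hG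
  have hGsum : ∀ τ, G τ = ∑ i, ∑ j,
      Real.exp (-(d i + d j) * τ) • Matrix.single i j (Y i j) := by
    intro τ
    simp only [Matrix.smul_single, smul_eq_mul]
    exact Matrix.matrix_eq_sum_single _
  have hGint : @IntegrableOn _ _ _ PseudoMetricSpace.toUniformSpace.toTopologicalSpace _ G (Set.Ioi 0) volume := by
    rw [show G = fun τ => ∑ i, ∑ j,
      Real.exp (-(d i + d j) * τ) • Matrix.single i j (Y i j) from funext hGsum]
    refine integrable_finset_sum _ (fun i _ => integrable_finset_sum _ (fun j _ => ?_))
    exact (exp_neg_integrableOn_Ioi 0 (by have := hd i; have := hd j; positivity :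
      (0:ℝ) < d i + d j)).smul_const _
  have hGval : ∫ τ in Set.Ioi (0:ℝ), G τ
      = Matrix.of (fun i j => (d i + d j)⁻¹ * Y i j) := by
    ext i j
    have hcc := (entryCLM (n := n) i j).integral_comp_comm hGint
    calc (∫ τ in Set.Ioi (0:ℝ), G τ) i j
        = entryCLM i j (∫ τ in Set.Ioi (0:ℝ), G τ) := rfl
      _ = ∫ τ in Set.Ioi (0:ℝ), entryCLM i j (G τ) := hcc.symm
      _ = ∫ τ in Set.Ioi (0:ℝ), Real.exp (-(d i + d j) * τ) * Y i j := rfl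
      _ = (d i + d j)⁻¹ * Y i j := by
          rw [MeasureTheory.integral_mul_const,
            integral_exp_neg_mul_Ioi (by have := hd i; have := hd j; positivity)]
  have hFG : ∀ τ : ℝ, NormedSpace.exp (-(τ • A)) * X * NormedSpace.exp (-(τ • A))
      = conjCLM U (G τ) := by
    intro τ
    have hGτ : G τ = Matrix.diagonal (fun i => Real.exp (-(τ * d i))) * Y
        * Matrix.diagonal (fun i => Real.exp (-(τ * d i))) := by
      ext i j
      simp only [hG, Matrix.of_apply, Matrix.mul_diagonal, Matrix.diagonal_mul]
      rw [show Real.exp (-(τ * d i)) * Y i j * Real.exp (-(τ * d j))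
          = (Real.exp (-(τ * d i)) * Real.exp (-(τ * d j))) * Y i j from by ring,
        ← Real.exp_add]
      congr 2
      ring
    rw [conjCLM_apply, hexp τ, hGτ]
    simp only [hY, Matrix.mul_assoc]
  have hFint : @IntegrableOn _ _ _ PseudoMetricSpace.toUniformSpace.toTopologicalSpace _
      (fun τ : ℝ => NormedSpace.exp (-(τ • A)) * X * NormedSpace.exp (-(τ • A)))
      (Set.Ioi 0) volume := by
    simp only [hFG]
    exact (conjCLM U).integrable_comp hGint
  refine ⟨hFint, ?_⟩
  have hlyap : lyapInt A X = U * (Matrix.of (fun i j => (d i + d j)⁻¹ * Y i j)) * star U := by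
    rw [lyapInt]
    simp only [hFG]
    rw [show ∫ τ in Set.Ioi (0:ℝ), conjCLM U (G τ) = conjCLM U (∫ τ in Set.Ioi (0:ℝ), G τ) from
      ContinuousLinearMap.integral_comp_comm _ hGint, hGval, conjCLM_apply, ← Matrix.mul_assoc]
  set H := Matrix.of (fun i j => (d i + d j)⁻¹ * Y i j) with hH
  have key : Matrix.diagonal d * H + H * Matrix.diagonal d = Y := by
    ext i j
    simp only [Matrix.add_apply, Matrix.diagonal_mul, Matrix.mul_diagonal, hH, Matrix.of_apply]
    have h0 : d i + d j ≠ 0 := by have := hd i; have := hd j; positivity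
    field_simp
  have cancel : ∀ M N : Matrix (Fin n) (Fin n) ℝ,
      (U * M * star U) * (U * N * star U) = U * (M * N) * star U := by
    intro M N
    have h5 : star U * (U * (N * star U)) = N * star U := by
      rw [← Matrix.mul_assoc, hU2, Matrix.one_mul]
    simp only [Matrix.mul_assoc, h5]
  rw [hlyap, spec, cancel, cancel, ← Matrix.add_mul, ← Matrix.mul_add, key, hY]
  have h6 : U * (star U * X * U) * star U = (U * star U) * X * (U * star U) := by
    simp only [Matrix.mul_assoc]
  rw [h6, hU1, Matrix.one_mul, Matrix.mul_one]

lemma lyap_unique {n : ℕ} {A : Matrix (Fin n) (Fin n) ℝ} (hA : A.PosDef)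
    {Ω : Matrix (Fin n) (Fin n) ℝ} (h : A * Ω + Ω * A = 0) : Ω = 0 := by
  have hAh := hA.isHermitian
  set U : Matrix (Fin n) (Fin n) ℝ := (hAh.eigenvectorUnitary : Matrix (Fin n) (Fin n) ℝ)
  set d : Fin n → ℝ := hAh.eigenvalues
  have hd : ∀ i, 0 < d i := fun i => hA.eigenvalues_pos i
  have hU1 : U * star U = 1 := Unitary.coe_mul_star_self _
  have hU2 : star U * U = 1 := Unitary.coe_star_mul_self _
  have spec : A = U * Matrix.diagonal d * star U := by
    have h' := hAh.spectral_theorem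
    simpa [RCLike.ofReal_real_eq_id] using h'
  set W := star U * Ω * U with hW
  have r1 : ∀ M : Matrix (Fin n) (Fin n) ℝ, star U * (U * M) = M := fun M => by
    rw [← Matrix.mul_assoc, hU2, Matrix.one_mul]
  have hDW : Matrix.diagonal d * W + W * Matrix.diagonal d = 0 := by
    have h2 : star U * (A * Ω + Ω * A) * U = 0 := by rw [h, Matrix.mul_zero, Matrix.zero_mul]
    rw [spec] at h2
    rw [hW, ← h2]
    simp only [Matrix.mul_add, Matrix.add_mul, Matrix.mul_assoc, r1, hU2, Matrix.mul_one]
  have hW0 : W = 0 := by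
    ext i j
    have h4 : (Matrix.diagonal d * W + W * Matrix.diagonal d) i j = 0 := by
      rw [hDW, Matrix.zero_apply]
    simp only [Matrix.add_apply, Matrix.diagonal_mul, Matrix.mul_diagonal] at h4
    have h0 : d i + d j ≠ 0 := by have := hd i; have := hd j; positivity
    have h5 : (d i + d j) * W i j = 0 := by linear_combination h4
    rw [Matrix.zero_apply]
    exact (mul_eq_zero.mp h5).resolve_left h0
  have hΩ : Ω = U * W * star U := by
    rw [hW]
    have hc : U * (star U * Ω * U) * star U = (U * star U) * Ω * (U * star U) := by
      simp only [Matrix.mul_assoc]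
    rw [hc, hU1, Matrix.one_mul, Matrix.mul_one]
  rw [hΩ, hW0, Matrix.mul_zero, Matrix.zero_mul]

noncomputable def transCLM (n : ℕ) :
    Matrix (Fin n) (Fin n) ℝ →L[ℝ] Matrix (Fin n) (Fin n) ℝ :=
  LinearMap.toContinuousLinearMap
    { toFun := Matrix.transpose
      map_add' := Matrix.transpose_add
      map_smul' := fun c M => Matrix.transpose_smul c M }

lemma transCLM_apply {n : ℕ} (M : Matrix (Fin n) (Fin n) ℝ) : transCLM n M = Mᵀ := rfl

lemma lyap_skew {n : ℕ} {A X : Matrix (Fin n) (Fin n) ℝ} (hA : A.PosDef)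
    (hAs : Aᵀ = A) (hX : Xᵀ = -X) : (lyapInt A X)ᵀ = -(lyapInt A X) := by
  have hFint := (lyap_main hA X).1
  have hFt : ∀ τ : ℝ, (NormedSpace.exp (-(τ • A)) * X * NormedSpace.exp (-(τ • A)))ᵀ
      = -(NormedSpace.exp (-(τ • A)) * X * NormedSpace.exp (-(τ • A))) := by
    intro τ
    have ht : (NormedSpace.exp (-(τ • A)))ᵀ = NormedSpace.exp (-(τ • A)) := by
      rw [← Matrix.exp_transpose, Matrix.transpose_neg, Matrix.transpose_smul, hAs]
    rw [Matrix.transpose_mul, Matrix.transpose_mul, ht, hX, Matrix.neg_mul, Matrix.mul_neg,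
      Matrix.mul_assoc]
  calc (lyapInt A X)ᵀ = transCLM n (lyapInt A X) := rfl
    _ = ∫ τ in Set.Ioi (0:ℝ),
          transCLM n (NormedSpace.exp (-(τ • A)) * X * NormedSpace.exp (-(τ • A))) :=
        (ContinuousLinearMap.integral_comp_comm _ hFint).symm
    _ = ∫ τ in Set.Ioi (0:ℝ),
          -(NormedSpace.exp (-(τ • A)) * X * NormedSpace.exp (-(τ • A))) := by
        simp only [transCLM_apply, hFt]
    _ = -(lyapInt A X) := by rw [integral_neg]; rfl

/-- The equation `S⁻¹Ω + ΩS⁻¹ = (k_B/2)(S⁻¹T - TS⁻¹)` has a unique solution; the solution is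
skew-symmetric and equals `Ω* = (k_B/2) 𝓛_{S⁻¹}(S⁻¹T - TS⁻¹)`. -/
theorem optimal_coupling_exists_unique {n : ℕ} (S T : Matrix (Fin n) (Fin n) ℝ) (k_B : ℝ)
    (hS : S.PosDef) (hT : T.IsHermitian) (hkB : 0 < k_B) :
    (∃! Ω : Matrix (Fin n) (Fin n) ℝ,
      S⁻¹ * Ω + Ω * S⁻¹ = (k_B / 2) • (S⁻¹ * T - T * S⁻¹)) ∧
    (S⁻¹ * ((k_B / 2) • lyapInt S⁻¹ (S⁻¹ * T - T * S⁻¹)) +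
        ((k_B / 2) • lyapInt S⁻¹ (S⁻¹ * T - T * S⁻¹)) * S⁻¹ =
      (k_B / 2) • (S⁻¹ * T - T * S⁻¹)) ∧
    ((k_B / 2) • lyapInt S⁻¹ (S⁻¹ * T - T * S⁻¹))ᵀ =
      -((k_B / 2) • lyapInt S⁻¹ (S⁻¹ * T - T * S⁻¹)) := by
  have hA : (S⁻¹).PosDef := hS.inv
  set X := S⁻¹ * T - T * S⁻¹ with hXdef
  have hSs : Sᵀ = S := by
    rw [← Matrix.conjTranspose_eq_transpose_of_trivial]; exact hS.isHermitian
  have hTs : Tᵀ = T := by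
    rw [← Matrix.conjTranspose_eq_transpose_of_trivial]; exact hT
  have hAs : (S⁻¹)ᵀ = S⁻¹ := by rw [Matrix.transpose_nonsing_inv, hSs]
  have hXs : Xᵀ = -X := by
    rw [hXdef, Matrix.transpose_sub, Matrix.transpose_mul, Matrix.transpose_mul, hAs, hTs,
      neg_sub]
  have hmain := lyap_main hA X
  have part2 : S⁻¹ * ((k_B / 2) • lyapInt S⁻¹ X) + ((k_B / 2) • lyapInt S⁻¹ X) * S⁻¹
      = (k_B / 2) • X := by
    rw [mul_smul_comm, smul_mul_assoc, ← smul_add, hmain.2]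
  refine ⟨⟨(k_B / 2) • lyapInt S⁻¹ X, part2, ?_⟩, part2, ?_⟩
  · intro y hy
    have expand : S⁻¹ * (y - (k_B / 2) • lyapInt S⁻¹ X)
          + (y - (k_B / 2) • lyapInt S⁻¹ X) * S⁻¹
        = (S⁻¹ * y + y * S⁻¹)
          - (S⁻¹ * ((k_B / 2) • lyapInt S⁻¹ X) + ((k_B / 2) • lyapInt S⁻¹ X) * S⁻¹) := by
      rw [Matrix.mul_sub, Matrix.sub_mul]; abel
    have hdiff : S⁻¹ * (y - (k_B / 2) • lyapInt S⁻¹ X)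
        + (y - (k_B / 2) • lyapInt S⁻¹ X) * S⁻¹ = 0 := by
      rw [expand, hy, part2, sub_self]
    have := lyap_unique hA hdiff
    exact sub_eq_zero.mp this
  · rw [Matrix.transpose_smul, lyap_skew hA hAs hXs, smul_neg]
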